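/- Let k be a field and R = k[x,y,z] with 𝔪 = (x,y,z). There exists a nonzero polynomial P over k in the 30 variables Y_{t,α}, where 1 ≤ t ≤ 5 and α runs over the six exponent vectors of degree-2 monomials in x,y,z, with the following property: for every 5-tuple (f_1,…,f_5) of homogeneous polynomials of degree 2 in R such that P does not vanish at the point whose (t,α)-coordinate is the coefficient of x^α in f_t, the ideal I = (f_1,…,f_5) satisfies 𝔪^3 ⊆ I, dim_k I_2 = 5, and dim_k Soc(R/I) = 1. (That is, an ideal generated by 5 general quadrics in k[x,y,z] is an 𝔪-primary Gorenstein ideal of codimension 3 minimally generated by 5 quadrics.) -/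

import Mathlib

open MvPolynomial

/-- The maximal graded ideal `𝔪 = (x, y, z)` of `k[x,y,z]`. -/
noncomputable def mIdeal (k : Type*) [Field k] : Ideal (MvPolynomial (Fin 3) k) :=
  Ideal.span (Set.range (X : Fin 3 → MvPolynomial (Fin 3) k))

/-- `dim_k Soc(R/I)`, the total dimension of the socle `(I : 𝔪)/I` of `R/I`,
realized as the image of the colon ideal `(I : 𝔪)` in `R/I`. -/
noncomputable def socDim {k : Type*} [Field k] (I : Ideal (MvPolynomial (Fin 3) k)) : ℕ :=
  Module.finrank k
    ↥(Submodule.map (Ideal.Quotient.mkₐ k I).toLinearMap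
      ((Submodule.colon I (mIdeal k)).restrictScalars k))

open Pointwise

namespace Stmt5Aux

abbrev A2 : Type := ↥(Finset.Nat.antidiagonalTuple 3 2)
abbrev Vars : Type := Fin 5 × A2

def q6 : Fin 6 → (Fin 3 → ℕ) := ![![2,0,0], ![1,1,0], ![1,0,1], ![0,2,0], ![0,1,1], ![0,0,2]]

def qA (i : Fin 6) : A2 := ⟨q6 i, by fin_cases i <;> decide⟩

def col5 : Fin 5 → A2 := fun j => qA (![1,2,3,5,0] j)

def c10 : Fin 10 → (Fin 3 → ℕ) :=
  ![![3,0,0], ![2,1,0], ![2,0,1], ![1,2,0], ![1,1,1], ![1,0,2], ![0,3,0], ![0,2,1], ![0,1,2], ![0,0,3]]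

def sel : Fin 10 → Fin 3 × Fin 5 :=
  ![(0,4),(0,0),(0,1),(1,0),(2,0),(2,1),(1,2),(2,2),(1,3),(2,3)]

def unit3 (b : Fin 3) : Fin 3 → ℕ := fun m => if m = b then 1 else 0

section Matrices

variable {S : Type*} [CommRing S] {S' : Type*} [CommRing S']

def M2 (c : Vars → S) : Matrix (Fin 5) (Fin 5) S :=
  Matrix.of fun t j => c (t, col5 j)

def M1 (c : Vars → S) : Matrix (Fin 10) (Fin 10) S :=
  Matrix.of fun i j =>
    ∑ a : A2, if (a : Fin 3 → ℕ) + unit3 (sel i).1 = c10 j then c ((sel i).2, a) else 0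

def B6 (c : Vars → S) (i j : Fin 3) : Matrix (Fin 6) (Fin 6) S :=
  Matrix.of fun r l =>
    if h : (r : ℕ) < 5 then c (⟨r, h⟩, qA l)
    else if (qA l : Fin 3 → ℕ) = unit3 i + unit3 j then 1 else 0

def M3 (c : Vars → S) : Matrix (Fin 3) (Fin 3) S :=
  Matrix.of fun i j => (B6 c i j).det

def Pdet (c : Vars → S) : S := (M2 c).det * ((M1 c).det * (M3 c).det)

variable (φ : S →+* S')

lemma M2_map (c : Vars → S) : M2 (fun v => φ (c v)) = (M2 c).map φ := by
  ext i j; simp [M2]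

lemma M1_map (c : Vars → S) : M1 (fun v => φ (c v)) = (M1 c).map φ := by
  ext i j; simp [M1, map_sum, apply_ite φ]

lemma B6_map (c : Vars → S) (i j : Fin 3) :
    B6 (fun v => φ (c v)) i j = (B6 c i j).map φ := by
  ext r l
  by_cases h : (r : ℕ) < 5 <;> simp [B6, h, apply_ite φ]

lemma M3_map (c : Vars → S) : M3 (fun v => φ (c v)) = (M3 c).map φ := by
  ext i j
  show (B6 (fun v => φ (c v)) i j).det = φ ((B6 c i j).det)
  rw [B6_map, RingHom.map_det, RingHom.mapMatrix_apply]

lemma M2_det_map (c : Vars → S) : (M2 (fun v => φ (c v))).det = φ (M2 c).det := by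
  rw [M2_map]
  exact ((RingHom.map_det φ _).trans (congrArg Matrix.det (RingHom.mapMatrix_apply φ _))).symm

lemma M1_det_map (c : Vars → S) : (M1 (fun v => φ (c v))).det = φ (M1 c).det := by
  rw [M1_map]
  exact ((RingHom.map_det φ _).trans (congrArg Matrix.det (RingHom.mapMatrix_apply φ _))).symm

lemma M3_det_map (c : Vars → S) : (M3 (fun v => φ (c v))).det = φ (M3 c).det := by
  rw [M3_map]
  exact ((RingHom.map_det φ _).trans (congrArg Matrix.det (RingHom.mapMatrix_apply φ _))).symm

lemma Pdet_map (c : Vars → S) : Pdet (fun v => φ (c v)) = φ (Pdet c) := by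
  rw [Pdet, Pdet, M2_det_map, M1_det_map, M3_det_map, map_mul, map_mul]

end Matrices

section IntPoint

def c0 : Vars → ℤ := fun p =>
  (if (p.1 = 0 ∧ (p.2 : Fin 3 → ℕ) = ![1,1,0]) ∨ (p.1 = 1 ∧ (p.2 : Fin 3 → ℕ) = ![1,0,1])
      ∨ (p.1 = 2 ∧ (p.2 : Fin 3 → ℕ) = ![0,2,0]) ∨ (p.1 = 3 ∧ (p.2 : Fin 3 → ℕ) = ![0,0,2])
      ∨ (p.1 = 4 ∧ (p.2 : Fin 3 → ℕ) = ![2,0,0]) then 1 else 0)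
  - (if p.1 = 4 ∧ (p.2 : Fin 3 → ℕ) = ![0,1,1] then 1 else 0)

lemma M2_c0 : M2 c0 = 1 := by
  decide

lemma M1_c0_tri : ∀ i j : Fin 10, (j : ℕ) < (i : ℕ) → M1 c0 i j = 0 := by
  simp only [M1, Matrix.of_apply]
  decide

lemma M1_c0_det : (M1 c0).det = 1 := by
  rw [Matrix.det_of_upperTriangular (by intro i j h; exact M1_c0_tri i j h)]
  decide

set_option maxHeartbeats 1000000 in
set_option maxRecDepth 10000 in
lemma Bx2det : (B6 c0 0 0).det = -1 := by
  have h : B6 c0 0 0 = !![0,1,0,0,0,0; 0,0,1,0,0,0; 0,0,0,1,0,0; 0,0,0,0,0,1; 1,0,0,0,-1,0; 1,0,0,0,0,0] := by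
    decide
  rw [h]; simp [Matrix.det_succ_row_zero, Fin.sum_univ_succ]; decide

set_option maxHeartbeats 1000000 in
set_option maxRecDepth 10000 in
lemma Byzdet : ∀ i j : Fin 3, ((i,j) = (1,2) ∨ (i,j) = (2,1)) → (B6 c0 i j).det = -1 := by
  have h : ∀ i j : Fin 3, ((i,j) = (1,2) ∨ (i,j) = (2,1)) → B6 c0 i j = !![0,1,0,0,0,0; 0,0,1,0,0,0; 0,0,0,1,0,0; 0,0,0,0,0,1; 1,0,0,0,-1,0; 0,0,0,0,1,0] := by
    decide
  intro i j hij
  rw [h i j hij]; simp [Matrix.det_succ_row_zero, Fin.sum_univ_succ]; decide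

lemma Bzero : ∀ i j : Fin 3, ¬((i,j) = (0,0) ∨ (i,j) = (1,2) ∨ (i,j) = (2,1)) → (B6 c0 i j).det = 0 := by
  have key : ∀ i j : Fin 3, ¬((i,j) = (0,0) ∨ (i,j) = (1,2) ∨ (i,j) = (2,1)) →
      ∃ r : Fin 6, (r : ℕ) < 5 ∧ ∀ l, B6 c0 i j r l = B6 c0 i j 5 l := by
    simp only [B6, Matrix.of_apply]
    decide
  intro i j hij
  obtain ⟨r, hr5, hrow⟩ := key i j hij
  refine Matrix.det_zero_of_row_eq (fun h => ?_) (funext hrow)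
  rw [h] at hr5; exact (by decide : ¬ (((5:Fin 6) : ℕ) < 5)) hr5

lemma M3_c0_det : (M3 c0).det = 1 := by
  rw [Matrix.det_fin_three]
  simp only [M3, Matrix.of_apply]
  rw [Bx2det, Byzdet 1 2 (by decide), Byzdet 2 1 (by decide),
    Bzero 0 1 (by decide), Bzero 0 2 (by decide), Bzero 1 0 (by decide),
    Bzero 1 1 (by decide), Bzero 2 0 (by decide), Bzero 2 2 (by decide)]
  norm_num

lemma Pdet_c0 : Pdet c0 = 1 := by
  rw [Pdet, M2_c0, M1_c0_det, M3_c0_det, Matrix.det_one]; norm_num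

end IntPoint

section Generic

variable (k : Type*) [Field k]

noncomputable def Pgen : MvPolynomial Vars k :=
  Pdet (X : Vars → MvPolynomial Vars k)

lemma eval_Pgen (c : Vars → k) : eval c (Pgen k) = Pdet c := by
  have h1 : Pdet (fun v => (eval c : MvPolynomial Vars k →+* k) (X v)) = eval c (Pdet X) :=
    Pdet_map (eval c) X
  have h2 : (fun v => (eval c : MvPolynomial Vars k →+* k) (X v)) = c := by
    funext v; simp
  rw [Pgen, ← h1, h2]

lemma Pgen_ne : Pgen k ≠ 0 := by
  intro h
  have h1 : Pdet (fun v => ((c0 v : ℤ) : k)) = (1 : k) := by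
    have := Pdet_map (Int.castRingHom k) c0
    rw [Pdet_c0] at this
    simpa using this
  rw [← eval_Pgen, h] at h1
  simp at h1

end Generic

/-! ### Finsupp helpers -/

noncomputable def emb (v : Fin 3 → ℕ) : Fin 3 →₀ ℕ := Finsupp.equivFunOnFinite.symm v

@[simp] lemma emb_apply (v : Fin 3 → ℕ) (m : Fin 3) : emb v m = v m := by
  simp [emb]

lemma emb_inj : Function.Injective emb := Finsupp.equivFunOnFinite.symm.injective

lemma emb_coe (μ : Fin 3 →₀ ℕ) : emb ⇑μ = μ := by
  ext m; simp

lemma coe_emb (v : Fin 3 → ℕ) : ⇑(emb v) = v := by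
  funext m; simp

lemma degree_eq (μ : Fin 3 →₀ ℕ) : μ.degree = ∑ i, μ i :=
  Finset.sum_subset (Finset.subset_univ _) (fun i _ hi => Finsupp.notMem_support_iff.mp hi)

lemma degree_add (μ ν : Fin 3 →₀ ℕ) : (μ + ν).degree = μ.degree + ν.degree := by
  simp [degree_eq, Finsupp.add_apply, Finset.sum_add_distrib]

lemma degree_single (j : Fin 3) : (Finsupp.single j (1:ℕ)).degree = 1 := by
  rw [degree_eq]
  simp [Finsupp.single_apply]

lemma degree_eq_zero {μ : Fin 3 →₀ ℕ} (h : μ.degree = 0) : μ = 0 := by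
  rw [degree_eq] at h
  ext m
  have := Finset.sum_eq_zero_iff.mp h m (Finset.mem_univ m)
  simpa using this

lemma degree_emb_mem (a : A2) : (emb ↑a).degree = 2 := by
  rw [degree_eq]
  simp only [emb_apply]
  exact Finset.Nat.mem_antidiagonalTuple.mp a.2

lemma sub_single_add {μ : Fin 3 →₀ ℕ} {i : Fin 3} (h : μ i ≠ 0) :
    (μ - Finsupp.single i 1) + Finsupp.single i 1 = μ := by
  ext m
  by_cases hm : m = i
  · subst hm
    simp only [Finsupp.add_apply, Finsupp.tsub_apply, Finsupp.single_eq_same]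
    omega
  · simp [Finsupp.single_apply, Ne.symm hm, hm]

variable {k : Type*} [Field k]

/-! ### representation lemmas -/

lemma repr2 {f : MvPolynomial (Fin 3) k} (hf : f.IsHomogeneous 2) :
    f = ∑ a : A2, monomial (emb ↑a) (coeff (emb ↑a) f) := by
  ext μ
  rw [coeff_sum]
  by_cases hd : μ.degree = 2
  · have hmem : (⇑μ : Fin 3 → ℕ) ∈ Finset.Nat.antidiagonalTuple 3 2 := by
      rw [Finset.Nat.mem_antidiagonalTuple, ← degree_eq]; exact hd
    rw [Finset.sum_eq_single (⟨⇑μ, hmem⟩ : A2)]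
    · rw [coeff_monomial, if_pos (by rw [emb_coe]), emb_coe]
    · intro b _ hb
      rw [coeff_monomial, if_neg]
      intro he
      have h2 : (⇑(emb ↑b) : Fin 3 → ℕ) = ⇑μ := congrArg _ he
      rw [coe_emb] at h2
      exact hb (Subtype.ext h2)
    · intro h; exact absurd (Finset.mem_univ _) h
  · rw [hf.coeff_eq_zero hd, Finset.sum_eq_zero]
    intro a _
    rw [coeff_monomial, if_neg]
    intro he
    exact hd (by rw [← he]; exact degree_emb_mem a)

lemma repr1 {ℓ : MvPolynomial (Fin 3) k} (hl : ℓ.IsHomogeneous 1) :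
    ℓ = ∑ i : Fin 3, coeff (Finsupp.single i 1) ℓ • X i := by
  ext μ
  rw [coeff_sum]
  by_cases hd : μ.degree = 1
  · have hmem : (⇑μ : Fin 3 → ℕ) ∈ Finset.Nat.antidiagonalTuple 3 1 := by
      rw [Finset.Nat.mem_antidiagonalTuple, ← degree_eq]; exact hd
    have key : ∀ v ∈ Finset.Nat.antidiagonalTuple 3 1, ∃ i : Fin 3,
        v = fun m => if m = i then 1 else 0 := by decide
    obtain ⟨i, hi⟩ := key _ hmem
    have hμ : μ = Finsupp.single i 1 := by
      ext m
      rw [show μ m = (⇑μ : Fin 3 → ℕ) m from rfl, hi]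
      simp [Finsupp.single_apply, eq_comm]
    subst hμ
    rw [Finset.sum_eq_single i]
    · rw [coeff_smul, coeff_X, smul_eq_mul, if_pos rfl, mul_one]
    · intro b _ hb
      rw [coeff_smul, coeff_X', if_neg, smul_eq_mul, mul_zero]
      intro he
      exact hb (Finsupp.single_left_injective one_ne_zero he)
    · intro h; exact absurd (Finset.mem_univ _) h
  · rw [hl.coeff_eq_zero hd, Finset.sum_eq_zero]
    intro i _
    rw [coeff_smul, coeff_X', if_neg, smul_eq_mul, mul_zero]
    intro he
    exact hd (by rw [← he, degree_single])

lemma class3 (μ : Fin 3 →₀ ℕ) (h : μ.degree = 3) : ∃ j : Fin 10, μ = emb (c10 j) := by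
  have hmem : (⇑μ : Fin 3 → ℕ) ∈ Finset.Nat.antidiagonalTuple 3 3 := by
    rw [Finset.Nat.mem_antidiagonalTuple, ← degree_eq]; exact h
  have key : ∀ v ∈ Finset.Nat.antidiagonalTuple 3 3, ∃ j : Fin 10, v = c10 j := by decide
  obtain ⟨j, hj⟩ := key _ hmem
  exact ⟨j, by rw [← hj, emb_coe]⟩

/-! ### multiplication and homogeneous components -/

lemma coeff_mul_low {g f2 : MvPolynomial (Fin 3) k} (hf2 : f2.IsHomogeneous 2)
    {μ : Fin 3 →₀ ℕ} (hμ : μ.degree < 2) : coeff μ (g * f2) = 0 := by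
  rw [coeff_mul]
  apply Finset.sum_eq_zero
  rintro ⟨a, b⟩ hab
  by_cases hb : coeff b f2 = 0
  · simp [hb]
  · exfalso
    have hbd : b.degree = 2 := by
      by_contra hne; exact hb (hf2.coeff_eq_zero hne)
    have hab' : a + b = μ := Finset.HasAntidiagonal.mem_antidiagonal.mp hab
    have := degree_add a b
    rw [hab', hbd] at this
    omega

lemma homogComp2_mul {g f2 : MvPolynomial (Fin 3) k} (hf2 : f2.IsHomogeneous 2) :
    homogeneousComponent 2 (g * f2) = coeff 0 g • f2 := by
  ext μ
  rw [coeff_homogeneousComponent, coeff_smul]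
  by_cases hd : μ.degree = 2
  · rw [if_pos hd, coeff_mul]
    rw [Finset.sum_eq_single ((0 : Fin 3 →₀ ℕ), μ)]
    · rfl
    · rintro ⟨a, b⟩ hab hne
      by_cases hb : coeff b f2 = 0
      · simp [hb]
      · exfalso
        have hbd : b.degree = 2 := by
          by_contra hne2; exact hb (hf2.coeff_eq_zero hne2)
        have hab' : a + b = μ := Finset.HasAntidiagonal.mem_antidiagonal.mp hab
        have hda := degree_add a b
        rw [hab', hbd, hd] at hda
        have ha0 : a = 0 := degree_eq_zero (by omega)
        subst ha0
        rw [zero_add] at hab'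
        exact hne (by rw [hab'])
    · intro h
      exact absurd (Finset.HasAntidiagonal.mem_antidiagonal.mpr (zero_add μ)) h
  · rw [if_neg hd, hf2.coeff_eq_zero hd, smul_eq_mul, mul_zero]

lemma comp2_mem {f : Fin 5 → MvPolynomial (Fin 3) k} (hf : ∀ t, (f t).IsHomogeneous 2)
    {p : MvPolynomial (Fin 3) k} (hp : p ∈ Ideal.span (Set.range f)) :
    homogeneousComponent 2 p ∈ Submodule.span k (Set.range f) := by
  obtain ⟨g, hg⟩ := Ideal.mem_span_range_iff_exists_fun.mp hp
  rw [← hg, map_sum]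
  apply Submodule.sum_mem
  intro t _
  rw [homogComp2_mul (hf t)]
  exact Submodule.smul_mem _ _ (Submodule.subset_span ⟨t, rfl⟩)

lemma coeff_low_zero {f : Fin 5 → MvPolynomial (Fin 3) k} (hf : ∀ t, (f t).IsHomogeneous 2)
    {p : MvPolynomial (Fin 3) k} (hp : p ∈ Ideal.span (Set.range f))
    {μ : Fin 3 →₀ ℕ} (hμ : μ.degree < 2) : coeff μ p = 0 := by
  obtain ⟨g, hg⟩ := Ideal.mem_span_range_iff_exists_fun.mp hp
  rw [← hg, coeff_sum]
  exact Finset.sum_eq_zero fun t _ => coeff_mul_low (hf t) hμ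

lemma comp_self {p : MvPolynomial (Fin 3) k} {n : ℕ} (hp : p.IsHomogeneous n) :
    homogeneousComponent n p = p := by
  ext μ
  rw [coeff_homogeneousComponent]
  by_cases h : μ.degree = n
  · rw [if_pos h]
  · rw [if_neg h, hp.coeff_eq_zero h]

lemma homogComp_mul_X (p : MvPolynomial (Fin 3) k) (j : Fin 3) (n : ℕ) :
    homogeneousComponent (n+1) (p * X j) = homogeneousComponent n p * X j := by
  ext μ
  rw [coeff_homogeneousComponent, coeff_mul_X', coeff_mul_X']
  by_cases hj : j ∈ μ.support
  · rw [if_pos hj, if_pos hj, coeff_homogeneousComponent]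
    have hμj : μ j ≠ 0 := Finsupp.mem_support_iff.mp hj
    have hdeg : μ.degree = (μ - Finsupp.single j 1).degree + 1 := by
      conv_lhs => rw [← sub_single_add hμj]
      rw [degree_add, degree_single]
    by_cases hd : μ.degree = n + 1
    · rw [if_pos hd, if_pos (by omega)]
    · rw [if_neg hd, if_neg (by omega)]
  · rw [if_neg hj, if_neg hj, ite_self]

/-! ### the maximal ideal -/

lemma X_mem_m (i : Fin 3) : (X i : MvPolynomial (Fin 3) k) ∈ mIdeal k :=
  Ideal.subset_span ⟨i, rfl⟩

lemma monomial_mem_pow : ∀ (n : ℕ) (μ : Fin 3 →₀ ℕ) (r : k), n ≤ μ.degree →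
    monomial μ r ∈ (mIdeal k)^n
  | 0, μ, r, _ => by simp
  | (n+1), μ, r, h => by
    have hμ : ∃ i, μ i ≠ 0 := by
      by_contra hc
      push_neg at hc
      have : μ = 0 := by ext m; exact hc m
      rw [this] at h
      simp [degree_eq] at h
    obtain ⟨i, hi⟩ := hμ
    have hdeg : n ≤ (μ - Finsupp.single i 1).degree := by
      have := degree_add (μ - Finsupp.single i 1) (Finsupp.single i 1)
      rw [sub_single_add hi, degree_single] at this
      omega
    have heq : monomial μ r = monomial (μ - Finsupp.single i 1) r * X i := by
      rw [X, monomial_mul, mul_one, sub_single_add hi]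
    rw [heq, pow_succ]
    exact Ideal.mul_mem_mul (monomial_mem_pow n _ r hdeg) (X_mem_m i)

lemma mem_pow3 {p : MvPolynomial (Fin 3) k} (h : ∀ μ, coeff μ p ≠ 0 → 3 ≤ μ.degree) :
    p ∈ (mIdeal k)^3 := by
  rw [p.as_sum]
  exact Submodule.sum_mem _ fun μ hμ => monomial_mem_pow 3 μ _ (h μ (mem_support_iff.mp hμ))

lemma m3_le {J : Ideal (MvPolynomial (Fin 3) k)}
    (H : ∀ p : MvPolynomial (Fin 3) k, p.IsHomogeneous 3 → p ∈ J) :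
    (mIdeal k)^3 ≤ J := by
  set RX : Set (MvPolynomial (Fin 3) k) := Set.range X with hRX
  have h3 : (mIdeal k)^3 = Ideal.span (RX * RX * RX) := by
    rw [mIdeal, pow_succ, pow_succ, pow_one, Ideal.span_mul_span', Ideal.span_mul_span', ← hRX]
  rw [h3, Ideal.span_le]
  rintro m hm
  obtain ⟨ab, hab, c, hc, rfl⟩ := hm
  obtain ⟨a, ha, b, hb, rfl⟩ := hab
  obtain ⟨i, rfl⟩ := ha
  obtain ⟨j, rfl⟩ := hb
  obtain ⟨l, rfl⟩ := hc
  have : ((X i * X j : MvPolynomial (Fin 3) k) * X l).IsHomogeneous (1 + 1 + 1) :=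
    (((isHomogeneous_X k i).mul (isHomogeneous_X k j)).mul (isHomogeneous_X k l))
  exact H _ (by simpa using this)

/-! ### coefficient point of a tuple of quadrics -/

noncomputable def cf (f : Fin 5 → MvPolynomial (Fin 3) k) : Vars → k :=
  fun p => coeff (emb (p.2 : Fin 3 → ℕ)) (f p.1)

lemma lin_indep_f {f : Fin 5 → MvPolynomial (Fin 3) k}
    (hdet : (M2 (cf f)).det ≠ 0) : LinearIndependent k f := by
  rw [Fintype.linearIndependent_iff]
  intro g hg
  have hv : Matrix.vecMul g (M2 (cf f)) = 0 := by
    funext j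
    have h1 := congrArg (coeff (emb ↑(col5 j))) hg
    rw [coeff_sum] at h1
    simp only [coeff_smul, coeff_zero, smul_eq_mul] at h1
    simpa [Matrix.vecMul, dotProduct, M2, cf] using h1
  have := Matrix.eq_zero_of_vecMul_eq_zero hdet hv
  exact fun i => congrFun this i

lemma cond_iff (a : Fin 3 → ℕ) (b : Fin 3) (v : Fin 3 → ℕ) :
    (Finsupp.single b 1 + emb a = emb v) ↔ (a + unit3 b = v) := by
  have h1 : Finsupp.single b 1 + emb a = emb (a + unit3 b) := by
    ext m
    simp only [Finsupp.add_apply, Finsupp.single_apply, emb_apply, Pi.add_apply, unit3]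
    by_cases hm : m = b
    · subst hm; simp [Nat.add_comm]
    · rw [if_neg (fun h => hm h.symm), if_neg hm, zero_add, add_zero]
  rw [h1]
  exact ⟨fun h => emb_inj h, fun h => by rw [h]⟩

lemma M1_row {f : Fin 5 → MvPolynomial (Fin 3) k} (hf : ∀ t, (f t).IsHomogeneous 2)
    (i j : Fin 10) :
    M1 (cf f) i j = coeff (emb (c10 j)) (X (sel i).1 * f (sel i).2) := by
  conv_rhs => rw [repr2 (hf (sel i).2)]
  rw [Finset.mul_sum, coeff_sum]
  simp only [M1, Matrix.of_apply]
  apply Finset.sum_congr rfl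
  intro a _
  rw [X, monomial_mul, one_mul, coeff_monomial]
  by_cases h : (a : Fin 3 → ℕ) + unit3 (sel i).1 = c10 j
  · rw [if_pos h, if_pos ((cond_iff _ _ _).mpr h)]
    rfl
  · rw [if_neg h, if_neg (fun hc => h ((cond_iff _ _ _).mp hc))]

lemma homog3_mem {f : Fin 5 → MvPolynomial (Fin 3) k} (hf : ∀ t, (f t).IsHomogeneous 2)
    (hdet : (M1 (cf f)).det ≠ 0) :
    ∀ p : MvPolynomial (Fin 3) k, p.IsHomogeneous 3 → p ∈ Ideal.span (Set.range f) := by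
  intro p hp
  set M := M1 (cf f) with hM
  have hMT : M.transpose.det ≠ 0 := by rwa [Matrix.det_transpose]
  set Φ : MvPolynomial (Fin 3) k → (Fin 10 → k) := fun q j => coeff (emb (c10 j)) q with hΦ
  set b : Fin 10 → k := (M.transpose)⁻¹.mulVec (Φ p) with hb
  set q : MvPolynomial (Fin 3) k := ∑ i, b i • (X (sel i).1 * f (sel i).2) with hq
  have hΦq : Φ q = Φ p := by
    have h1 : Φ q = M.transpose.mulVec b := by
      funext j
      rw [hΦ]
      simp only [hq, coeff_sum, coeff_smul, smul_eq_mul]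
      rw [Matrix.mulVec]
      simp only [dotProduct, Matrix.transpose_apply]
      apply Finset.sum_congr rfl
      intro i _
      rw [hM, M1_row hf, mul_comm]
    rw [h1, hb, Matrix.mulVec_mulVec,
      Matrix.mul_nonsing_inv _ (isUnit_iff_ne_zero.mpr hMT), Matrix.one_mulVec]
  have hq3 : q.IsHomogeneous 3 := by
    have : q ∈ homogeneousSubmodule (Fin 3) k 3 := by
      rw [hq]
      apply Submodule.sum_mem
      intro i _
      apply Submodule.smul_mem
      rw [mem_homogeneousSubmodule]
      have := (isHomogeneous_X k (sel i).1).mul (hf (sel i).2)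
      simpa using this
    rwa [mem_homogeneousSubmodule] at this
  have hqp : q = p := by
    ext μ
    by_cases hd : μ.degree = 3
    · obtain ⟨j, rfl⟩ := class3 μ hd
      exact congrFun hΦq j
    · rw [hq3.coeff_eq_zero hd, hp.coeff_eq_zero hd]
  rw [← hqp, hq]
  apply Ideal.sum_mem
  intro i _
  rw [smul_eq_C_mul]
  exact Ideal.mul_mem_left _ _ (Ideal.mul_mem_left _ _ (Ideal.subset_span ⟨(sel i).2, rfl⟩))

lemma coeff_emb_XX (v : Fin 3 → ℕ) (i j : Fin 3) :
    coeff (emb v) (X i * X j : MvPolynomial (Fin 3) k)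
      = if v = unit3 i + unit3 j then 1 else 0 := by
  rw [X, X, monomial_mul, mul_one, coeff_monomial]
  have h1 : Finsupp.single i 1 + Finsupp.single j 1 = emb (unit3 i + unit3 j) := by
    ext m
    simp only [Finsupp.add_apply, Finsupp.single_apply, emb_apply, Pi.add_apply, unit3]
    congr 1 <;> exact if_congr eq_comm rfl rfl
  rw [h1]
  refine if_congr ⟨fun h => (emb_inj h).symm, fun h => by rw [h]⟩ rfl rfl

set_option maxHeartbeats 800000 in
lemma ell_zero {f : Fin 5 → MvPolynomial (Fin 3) k} (hf : ∀ t, (f t).IsHomogeneous 2)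
    (hdet : (M3 (cf f)).det ≠ 0) {ℓ : MvPolynomial (Fin 3) k} (hl : ℓ.IsHomogeneous 1)
    (hs : ∀ j, ℓ * X j ∈ Submodule.span k (Set.range f)) : ℓ = 0 := by
  set c := cf f with hc
  set a : Fin 3 → k := fun i => coeff (Finsupp.single i 1) ℓ with ha
  set B0 : Matrix (Fin 6) (Fin 6) k :=
    Matrix.of (fun r l => if h : (r:ℕ) < 5 then c (⟨r,h⟩, qA l) else 0) with hB0
  have hupd : ∀ v : Fin 6 → k,
      (Matrix.of fun (r : Fin 6) (l : Fin 6) => if h : (r:ℕ) < 5 then c (⟨r,h⟩, qA l) else v l)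
        = B0.updateRow 5 v := by
    intro v
    ext r l
    by_cases h : (r:ℕ) < 5
    · have hr5 : r ≠ 5 := by
        intro e; rw [e] at h; exact (by decide : ¬ (((5:Fin 6):ℕ) < 5)) h
      rw [Matrix.updateRow_ne hr5]
      simp [hB0, h]
    · have hr : r = 5 := by
        apply Fin.ext
        have := r.isLt
        omega
      subst hr
      rw [Matrix.updateRow_self]
      simp [h]
  have hB6 : ∀ i j : Fin 3, B6 c i j
      = B0.updateRow 5 (fun l => if (qA l : Fin 3 → ℕ) = unit3 i + unit3 j then 1 else 0) :=
    fun i j => hupd _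
  have key : ∀ j : Fin 3, a 0 * M3 c 0 j + a 1 * M3 c 1 j + a 2 * M3 c 2 j = 0 := by
    intro j
    obtain ⟨d, hd⟩ := (Submodule.mem_span_range_iff_exists_fun k).mp (hs j)
    set w : Fin 6 → k := fun l => coeff (emb ↑(qA l)) (ℓ * X j) with hw
    set e : Fin 6 → k := fun r => if h : (r:ℕ) < 5 then d ⟨r,h⟩ else 0 with he
    have hB0app : ∀ (r l : Fin 6) (h : (r:ℕ) < 5), B0 r l = c (⟨r,h⟩, qA l) := by
      intro r l h
      simp only [hB0, Matrix.of_apply]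
      rw [dif_pos h]
    have heapp : ∀ t : Fin 5, e (Fin.castSucc t) = d t := by
      intro t
      have ht5 : ((Fin.castSucc t : Fin 6) : ℕ) < 5 := t.isLt
      simp only [he]
      rw [dif_pos ht5]
      exact congrArg d (by ext; simp)
    have helast : e (Fin.last 5) = 0 := by
      simp only [he]
      rw [dif_neg (by decide)]
    have hw1 : w = ∑ r : Fin 6, e r • B0 r := by
      funext l
      have h1 := congrArg (coeff (emb ↑(qA l))) hd
      rw [coeff_sum] at h1
      simp only [coeff_smul, smul_eq_mul] at h1
      have h2 : w l = ∑ x : Fin 5, d x * coeff (emb ↑(qA l)) (f x) := h1.symm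
      rw [h2, Finset.sum_apply]
      conv_rhs => rw [Fin.sum_univ_castSucc]
      rw [helast, zero_smul, Pi.zero_apply, add_zero]
      apply Finset.sum_congr rfl
      intro t _
      have ht5 : ((Fin.castSucc t : Fin 6) : ℕ) < 5 := t.isLt
      rw [Pi.smul_apply, smul_eq_mul, heapp t, hB0app _ _ ht5]
      congr 1
    have hdet0 : (B0.updateRow 5 w).det = 0 := by
      rw [hw1, Matrix.det_updateRow_sum]
      have h5 : e 5 = 0 := by
        simp only [he]
        rw [dif_neg (by decide)]
      rw [h5, zero_smul]
    set w0 : Fin 3 → Fin 6 → k :=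
      fun i l => if (qA l : Fin 3 → ℕ) = unit3 i + unit3 j then 1 else 0 with hw0
    have hw2 : w = a 0 • w0 0 + (a 1 • w0 1 + a 2 • w0 2) := by
      funext l
      show coeff (emb ↑(qA l)) (ℓ * X j) = _
      conv_lhs => rw [repr1 hl]
      rw [Finset.sum_mul, coeff_sum]
      simp only [smul_mul_assoc, coeff_smul, smul_eq_mul]
      rw [Fin.sum_univ_three]
      simp only [coeff_emb_XX, Pi.add_apply, Pi.smul_apply, smul_eq_mul, hw0]
      simp only [ha]
      ring
    have hdet2 : (B0.updateRow 5 w).det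
        = a 0 * M3 c 0 j + a 1 * M3 c 1 j + a 2 * M3 c 2 j := by
      rw [hw2, Matrix.det_updateRow_add, Matrix.det_updateRow_add,
        Matrix.det_updateRow_smul, Matrix.det_updateRow_smul, Matrix.det_updateRow_smul]
      have hM3 : ∀ i : Fin 3, (B0.updateRow 5 (w0 i)).det = M3 c i j := by
        intro i
        rw [show M3 c i j = (B6 c i j).det from rfl, hB6]
      rw [hM3 0, hM3 1, hM3 2]
      ring
    rw [hdet2] at hdet0
    exact hdet0
  have hv : Matrix.vecMul a (M3 c) = 0 := by
    funext j
    rw [Matrix.vecMul]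
    simp only [dotProduct]
    rw [Fin.sum_univ_three]
    simp only [Pi.zero_apply]
    exact key j
  have haz := Matrix.eq_zero_of_vecMul_eq_zero hdet hv
  rw [repr1 hl]
  apply Finset.sum_eq_zero
  intro i _
  rw [show coeff (Finsupp.single i 1) ℓ = a i from rfl, congrFun haz i, Pi.zero_apply, zero_smul]

end Stmt5Aux

namespace Stmt5Aux

variable {k : Type*} [Field k]

lemma card_A2 : Fintype.card A2 = 6 := by
  rw [Fintype.card_coe]
  decide

noncomputable def mA : A2 → MvPolynomial (Fin 3) k := fun a => monomial (emb ↑a) 1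

lemma mA_li : LinearIndependent k (mA (k := k)) := by
  rw [Fintype.linearIndependent_iff]
  intro g hg a
  have h1 := congrArg (coeff (emb ↑a)) hg
  rw [coeff_sum] at h1
  simp only [coeff_smul, smul_eq_mul, coeff_zero] at h1
  rw [Finset.sum_eq_single a] at h1
  · simpa [mA, coeff_monomial] using h1
  · intro b _ hb
    rw [mA, coeff_monomial, if_neg, mul_zero]
    intro he
    refine hb (Subtype.ext ?_)
    have h2 : (⇑(emb ↑b) : Fin 3 → ℕ) = ⇑(emb ↑a) := congrArg _ he
    rwa [coe_emb, coe_emb] at h2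
  · intro h; exact absurd (Finset.mem_univ a) h

lemma mem_spanA {q : MvPolynomial (Fin 3) k} (hq : q.IsHomogeneous 2) :
    q ∈ Submodule.span k (Set.range (mA (k := k))) := by
  rw [repr2 hq]
  apply Submodule.sum_mem
  intro a _
  have h1 : (monomial (emb ↑a)) (coeff (emb ↑a) q) = coeff (emb ↑a) q • mA a := by
    rw [mA, smul_monomial, smul_eq_mul, mul_one]
  rw [h1]
  exact Submodule.smul_mem _ _ (Submodule.subset_span ⟨a, rfl⟩)

end Stmt5Aux


open Stmt5Aux in
set_option maxHeartbeats 1000000 in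
/-- There is a nonzero polynomial `P` in the 30 variables `Y_{t,α}` (`1 ≤ t ≤ 5`, `α` a
degree-2 exponent vector in three variables) such that whenever `P` does not vanish at the
coefficient point of a 5-tuple of quadrics `f_1,…,f_5 ∈ k[x,y,z]`, the ideal
`I = (f_1,…,f_5)` satisfies `𝔪³ ⊆ I`, `dim_k I_2 = 5` and `dim_k Soc(R/I) = 1`:
five general quadrics generate an `𝔪`-primary Gorenstein ideal of codimension 3 minimally
generated by 5 quadrics. -/
theorem stmt5 (k : Type*) [Field k] :
    ∃ P : MvPolynomial (Fin 5 × ↥(Finset.Nat.antidiagonalTuple 3 2)) k, P ≠ 0 ∧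
      ∀ f : Fin 5 → MvPolynomial (Fin 3) k, (∀ t, (f t).IsHomogeneous 2) →
        MvPolynomial.eval
          (fun p => MvPolynomial.coeff
            (Finsupp.equivFunOnFinite.symm ((p.2 : Fin 3 → ℕ))) (f p.1)) P ≠ 0 →
        (mIdeal k) ^ 3 ≤ Ideal.span (Set.range f)
        ∧ Module.finrank k
            ↥((Ideal.span (Set.range f)).restrictScalars k ⊓
              homogeneousSubmodule (Fin 3) k 2) = 5
        ∧ socDim (Ideal.span (Set.range f)) = 1 := by
  classical
  refine ⟨Pgen k, Pgen_ne k, ?_⟩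
  intro f hf hev
  rw [eval_Pgen] at hev
  have hcc : (fun p : Vars => coeff (Finsupp.equivFunOnFinite.symm ((p.2 : Fin 3 → ℕ))) (f p.1))
      = cf f := rfl
  rw [hcc, Pdet] at hev
  have hd2 : (M2 (cf f)).det ≠ 0 := fun h => hev (by rw [h, zero_mul])
  have hd1 : (M1 (cf f)).det ≠ 0 := fun h => hev (by rw [h, zero_mul, mul_zero])
  have hd3 : (M3 (cf f)).det ≠ 0 := fun h => hev (by rw [h, mul_zero, mul_zero])
  set I := Ideal.span (Set.range f) with hI
  have hhom3 : ∀ p : MvPolynomial (Fin 3) k, p.IsHomogeneous 3 → p ∈ I := homog3_mem hf hd1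
  have goal1 : (mIdeal k)^3 ≤ I := m3_le hhom3
  have hli : LinearIndependent k f := lin_indep_f hd2
  haveI : FiniteDimensional k (Submodule.span k (Set.range f)) :=
    FiniteDimensional.span_of_finite k (Set.finite_range f)
  have hI2le : ∀ p : MvPolynomial (Fin 3) k, p ∈ I → p.IsHomogeneous 2 →
      p ∈ Submodule.span k (Set.range f) := by
    intro p hp hp2
    rw [← comp_self hp2]
    exact comp2_mem hf hp
  have hI2 : (I.restrictScalars k ⊓ homogeneousSubmodule (Fin 3) k 2)
      = Submodule.span k (Set.range f) := by
    apply le_antisymm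
    · rintro p ⟨hp1, hp2⟩
      exact hI2le p hp1 ((mem_homogeneousSubmodule _ _).mp hp2)
    · rw [Submodule.span_le]
      rintro _ ⟨t, rfl⟩
      exact ⟨Ideal.subset_span ⟨t, rfl⟩, (mem_homogeneousSubmodule _ _).mpr (hf t)⟩
  have goal2 : Module.finrank k
      ↥(I.restrictScalars k ⊓ homogeneousSubmodule (Fin 3) k 2) = 5 := by
    rw [hI2, finrank_span_eq_card hli, Fintype.card_fin]
  refine ⟨goal1, goal2, ?_⟩
  -- a monomial outside the span of the quadrics
  have hex : ∃ a0 : A2, mA a0 ∉ Submodule.span k (Set.range f) := by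
    by_contra hcon
    push_neg at hcon
    have hle : Submodule.span k (Set.range (mA (k := k))) ≤ Submodule.span k (Set.range f) := by
      rw [Submodule.span_le]; rintro _ ⟨a, rfl⟩; exact hcon a
    have e1 : Module.finrank k (Submodule.span k (Set.range (mA (k := k)))) = 6 := by
      rw [finrank_span_eq_card mA_li, card_A2]
    have e2 : Module.finrank k (Submodule.span k (Set.range f)) = 5 := by
      rw [finrank_span_eq_card hli, Fintype.card_fin]
    have h65 : (6:ℕ) ≤ 5 := by
      calc (6:ℕ) = _ := e1.symm
        _ ≤ _ := Submodule.finrank_mono hle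
        _ = 5 := e2
    omega
  obtain ⟨a0, ha0⟩ := hex
  set m0 : MvPolynomial (Fin 3) k := mA a0 with hm0
  have hm0hom : m0.IsHomogeneous 2 := isHomogeneous_monomial 1 (degree_emb_mem a0)
  have hm0I : m0 ∉ I := fun h => ha0 (hI2le _ h hm0hom)
  have hm0m2 : m0 ∈ (mIdeal k)^2 :=
    monomial_mem_pow 2 _ _ (le_of_eq (degree_emb_mem a0).symm)
  have hm0colon : m0 ∈ Submodule.colon I (mIdeal k) := by
    rw [Submodule.mem_colon]
    intro p hp
    rw [smul_eq_mul]
    exact goal1 (by rw [pow_succ]; exact Ideal.mul_mem_mul hm0m2 hp)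
  haveI : FiniteDimensional k (Submodule.span k ({m0} : Set (MvPolynomial (Fin 3) k))) :=
    FiniteDimensional.span_of_finite k (Set.finite_singleton _)
  haveI : FiniteDimensional k (Submodule.span k (Set.range (mA (k := k)))) :=
    FiniteDimensional.span_of_finite k (Set.finite_range _)
  have hm0ne : m0 ≠ 0 := by
    rw [hm0, mA]
    intro h
    exact one_ne_zero (monomial_eq_zero.mp h)
  have hW : ∀ q : MvPolynomial (Fin 3) k, q.IsHomogeneous 2 →
      q ∈ Submodule.span k (Set.range f) ⊔ Submodule.span k {m0} := by
    intro q hq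
    have hWle : Submodule.span k (Set.range f) ⊔ Submodule.span k {m0}
        ≤ Submodule.span k (Set.range (mA (k := k))) := by
      apply sup_le
      · rw [Submodule.span_le]; rintro _ ⟨t, rfl⟩; exact mem_spanA (hf t)
      · rw [Submodule.span_le]
        intro x hx
        rw [Set.mem_singleton_iff] at hx
        subst hx
        exact Submodule.subset_span ⟨a0, rfl⟩
    have hinf : Submodule.span k (Set.range f) ⊓ Submodule.span k {m0}
        = (⊥ : Submodule k (MvPolynomial (Fin 3) k)) := by
      rw [eq_bot_iff]
      rintro x ⟨hx1, hx2⟩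
      obtain ⟨r, rfl⟩ := Submodule.mem_span_singleton.mp hx2
      by_cases hr : r = 0
      · rw [hr, zero_smul]; exact Submodule.zero_mem ⊥
      · exfalso
        apply ha0
        have := Submodule.smul_mem (Submodule.span k (Set.range f)) r⁻¹ hx1
        rwa [inv_smul_smul₀ hr] at this
    have hfr : Module.finrank k
        ↥(Submodule.span k (Set.range f) ⊔ Submodule.span k {m0}) = 6 := by
      have hsum := Submodule.finrank_sup_add_finrank_inf_eq
        (Submodule.span k (Set.range f)) (Submodule.span k {m0})
      rw [hinf, finrank_bot, finrank_span_eq_card hli, Fintype.card_fin,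
        finrank_span_singleton hm0ne] at hsum
      omega
    have hfr6 : Module.finrank k (Submodule.span k (Set.range (mA (k := k)))) = 6 := by
      rw [finrank_span_eq_card mA_li, card_A2]
    have hWeq := Submodule.eq_of_le_of_finrank_le hWle (by rw [hfr, hfr6])
    rw [hWeq]
    exact mem_spanA hq
  have hColonLe : (Submodule.colon I (mIdeal k)).restrictScalars k
      ≤ I.restrictScalars k ⊔ Submodule.span k {m0} := by
    intro h hh
    have hXj : ∀ j : Fin 3, h * X j ∈ I := by
      intro j
      have := Submodule.mem_colon.mp hh (X j) (X_mem_m j)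
      rwa [smul_eq_mul] at this
    have hcomp1 : homogeneousComponent 1 h = 0 := by
      refine ell_zero hf hd3 (homogeneousComponent_isHomogeneous 1 h) ?_
      intro j
      rw [← homogComp_mul_X]
      exact comp2_mem hf (hXj j)
    have hcomp0 : homogeneousComponent 0 h = 0 := by
      have h1 : homogeneousComponent 1 (h * X 0) = homogeneousComponent 0 h * X 0 :=
        homogComp_mul_X h 0 0
      have h2 : homogeneousComponent 1 (h * X 0) = 0 := by
        ext μ
        rw [coeff_homogeneousComponent, coeff_zero]
        by_cases hdg : μ.degree = 1
        · rw [if_pos hdg]; exact coeff_low_zero hf (hXj 0) (by omega)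
        · rw [if_neg hdg]
      rw [h2] at h1
      rcases mul_eq_zero.mp h1.symm with h3 | h3
      · exact h3
      · exact absurd h3 (X_ne_zero 0)
    set tail := h - homogeneousComponent 0 h - homogeneousComponent 1 h
      - homogeneousComponent 2 h with htl
    have htail : tail ∈ (mIdeal k)^3 := by
      apply mem_pow3
      intro μ hne
      by_contra hlt
      push_neg at hlt
      apply hne
      rw [htl]
      simp only [coeff_sub, coeff_homogeneousComponent]
      have hcase : μ.degree = 0 ∨ μ.degree = 1 ∨ μ.degree = 2 := by omega
      rcases hcase with h'|h'|h' <;> simp [h']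
    have hdecomp : h = homogeneousComponent 2 h
        + (homogeneousComponent 0 h + homogeneousComponent 1 h + tail) := by
      rw [htl]; ring
    rw [hdecomp, hcomp0, hcomp1]
    have hle2 : Submodule.span k (Set.range f) ⊔ Submodule.span k {m0}
        ≤ I.restrictScalars k ⊔ Submodule.span k {m0} := by
      refine sup_le_sup_right ?_ _
      rw [Submodule.span_le]
      rintro _ ⟨t, rfl⟩
      exact Ideal.subset_span ⟨t, rfl⟩
    refine Submodule.add_mem _ (hle2 (hW _ (homogeneousComponent_isHomogeneous 2 h))) ?_
    simp only [zero_add]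
    exact Submodule.mem_sup_left (goal1 htail)
  have hTeq : Submodule.map (Ideal.Quotient.mkₐ k I).toLinearMap
      ((Submodule.colon I (mIdeal k)).restrictScalars k)
      = Submodule.span k {(Ideal.Quotient.mkₐ k I) m0} := by
    apply le_antisymm
    · rintro _ ⟨x, hx, rfl⟩
      have hx2 := hColonLe hx
      obtain ⟨u, hu, v, hv, rfl⟩ := Submodule.mem_sup.mp hx2
      obtain ⟨r, rfl⟩ := Submodule.mem_span_singleton.mp hv
      have hπu : (Ideal.Quotient.mkₐ k I).toLinearMap u = 0 := by
        rw [AlgHom.toLinearMap_apply, Ideal.Quotient.mkₐ_eq_mk, Ideal.Quotient.eq_zero_iff_mem]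
        exact hu
      rw [LinearMap.map_add, hπu, zero_add, LinearMap.map_smul]
      exact Submodule.smul_mem _ _ (Submodule.subset_span rfl)
    · rw [Submodule.span_le]
      intro x hx
      rw [Set.mem_singleton_iff] at hx
      subst hx
      exact ⟨m0, hm0colon, rfl⟩
  have hπm0 : (Ideal.Quotient.mkₐ k I) m0 ≠ 0 := by
    intro h
    rw [Ideal.Quotient.mkₐ_eq_mk, Ideal.Quotient.eq_zero_iff_mem] at h
    exact hm0I h
  show Module.finrank k
    ↥(Submodule.map (Ideal.Quotient.mkₐ k I).toLinearMap
      ((Submodule.colon I (mIdeal k)).restrictScalars k)) = 1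
  rw [hTeq]
  exact finrank_span_singleton hπm0
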